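/- (Fréchet–Hoeffding lower bound) For any two nonnegative random variables ξ and Y with cdfs F_ξ and F_Y, and any uniform(0,1) random variable U, one has E[F_ξ^{-1}(U) F_Y^{-1}(1−U)] ≤ E[ξY]. -/

import Mathlib

set_option linter.unusedSectionVars false


open MeasureTheory ProbabilityTheory Set

/-- The cumulative distribution function of a random variable. -/
noncomputable def cdfOf {Ω : Type*} [MeasurableSpace Ω] (P : Measure Ω) (X : Ω → ℝ) :
    ℝ → ℝ := fun x => (P {ω | X ω ≤ x}).toReal

/-- The left-continuous generalized inverse (quantile function) of a cdf. -/
noncomputable def quantileOf (F : ℝ → ℝ) (p : ℝ) : ℝ := sInf {x : ℝ | p ≤ F x}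

/-- Truncated quantile function: quantile on (0,1), zero elsewhere. -/
noncomputable def gQuant (F : ℝ → ℝ) (u : ℝ) : ℝ :=
  if u ∈ Set.Ioo (0:ℝ) 1 then quantileOf F u else 0

section Aux

variable {Ω : Type*} [MeasurableSpace Ω] (P : Measure Ω) [IsProbabilityMeasure P]
  (ξ : Ω → ℝ)

lemma cdf_mono : Monotone (cdfOf P ξ) := by
  intro s t hst
  exact ENNReal.toReal_mono (measure_ne_top _ _)
    (measure_mono fun ω hω => le_trans hω hst)

lemma cdf_nonneg (s : ℝ) : 0 ≤ cdfOf P ξ s := ENNReal.toReal_nonneg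

lemma cdf_le_one (s : ℝ) : cdfOf P ξ s ≤ 1 := by
  have h : P {ω | ξ ω ≤ s} ≤ 1 := by
    simpa using measure_mono (μ := P) (subset_univ {ω | ξ ω ≤ s})
  calc (P {ω | ξ ω ≤ s}).toReal ≤ (1:ENNReal).toReal :=
        ENNReal.toReal_mono ENNReal.one_ne_top h
    _ = 1 := ENNReal.toReal_one

lemma cdf_neg (hξnn : ∀ ω, 0 ≤ ξ ω) {s : ℝ} (hs : s < 0) : cdfOf P ξ s = 0 := by
  have : {ω | ξ ω ≤ s} = ∅ := by
    ext ω; simp only [mem_setOf_eq, mem_empty_iff_false, iff_false, not_le]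
    exact lt_of_lt_of_le hs (hξnn ω)
  simp [cdfOf, this]

/-- If `0 < u ≤ F s` then `quantileOf F u ≤ s`. -/
lemma quantile_le (hξnn : ∀ ω, 0 ≤ ξ ω) {u s : ℝ} (hu : 0 < u)
    (h : u ≤ cdfOf P ξ s) : quantileOf (cdfOf P ξ) u ≤ s := by
  apply csInf_le
  · refine ⟨0, fun x hx => ?_⟩
    by_contra hx0
    push_neg at hx0
    have := cdf_neg P ξ hξnn hx0
    simp only [mem_setOf_eq] at hx
    rw [this] at hx
    linarith
  · exact h

lemma quantile_nonneg (hξnn : ∀ ω, 0 ≤ ξ ω) {u : ℝ} (hu : 0 < u) :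
    0 ≤ quantileOf (cdfOf P ξ) u := by
  rcases Set.eq_empty_or_nonempty {x : ℝ | u ≤ cdfOf P ξ x} with hS | hS
  · simp [quantileOf, hS, Real.sInf_empty]
  · apply le_csInf hS
    intro x hx
    by_contra hx0
    push_neg at hx0
    have := cdf_neg P ξ hξnn hx0
    simp only [mem_setOf_eq] at hx
    rw [this] at hx
    linarith

lemma gQuant_nonneg (hξnn : ∀ ω, 0 ≤ ξ ω) (u : ℝ) :
    0 ≤ gQuant (cdfOf P ξ) u := by
  unfold gQuant
  split
  · exact quantile_nonneg P ξ hξnn (by simp_all [Set.mem_Ioo])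
  · exact le_refl 0

/-- Key implication: if `0 < s < gQuant F u` then `F s < u` and `u ∈ (0,1)`. -/
lemma lt_of_lt_gQuant (hξnn : ∀ ω, 0 ≤ ξ ω) {u s : ℝ} (hs : 0 < s)
    (h : s < gQuant (cdfOf P ξ) u) : cdfOf P ξ s < u ∧ 0 < u ∧ u < 1 := by
  unfold gQuant at h
  by_cases hu : u ∈ Set.Ioo (0:ℝ) 1
  · rw [if_pos hu] at h
    refine ⟨?_, hu.1, hu.2⟩
    by_contra hle
    push_neg at hle
    exact absurd (quantile_le P ξ hξnn hu.1 hle) (not_le.mpr h)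
  · rw [if_neg hu] at h; linarith

/-- Right-continuity of the cdf along the sequence `s + 1/(n+1)`. -/
lemma cdf_rightcont (hξm : Measurable ξ) (s : ℝ) :
    Filter.Tendsto (fun n : ℕ => cdfOf P ξ (s + 1 / (n + 1))) Filter.atTop
      (nhds (cdfOf P ξ s)) := by
  have hA : ∀ n : ℕ, MeasurableSet {ω | ξ ω ≤ s + 1 / (n + 1)} :=
    fun n => hξm measurableSet_Iic
  have hanti : Antitone (fun n : ℕ => {ω | ξ ω ≤ s + 1 / ((n : ℝ) + 1)}) := by
    intro n m hnm ω hω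
    simp only [mem_setOf_eq] at *
    have hc : (n:ℝ) ≤ m := Nat.cast_le.mpr hnm
    have h1 : (1 : ℝ) / (m + 1) ≤ 1 / (n + 1) := by
      apply one_div_le_one_div_of_le
      · positivity
      · linarith
    linarith
  have hiInter : (⋂ n : ℕ, {ω | ξ ω ≤ s + 1 / ((n : ℝ) + 1)}) = {ω | ξ ω ≤ s} := by
    ext ω
    simp only [mem_iInter, mem_setOf_eq]
    constructor
    · intro h
      have hlim : Filter.Tendsto (fun n : ℕ => s + 1 / ((n : ℝ) + 1)) Filter.atTop
          (nhds (s + 0)) :=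
        (tendsto_const_nhds).add tendsto_one_div_add_atTop_nhds_zero_nat
      rw [add_zero] at hlim
      exact ge_of_tendsto' hlim h
    · intro h n
      have : (0:ℝ) < 1 / ((n : ℝ) + 1) := by positivity
      linarith
  have hT := tendsto_measure_iInter_atTop (μ := P)
    (fun n => (hA n).nullMeasurableSet) hanti ⟨0, measure_ne_top P _⟩
  rw [hiInter] at hT
  have := (ENNReal.tendsto_toReal (measure_ne_top P {ω | ξ ω ≤ s})).comp hT
  simpa [cdfOf, Function.comp_def] using this

/-- The cdf tends to 1 along ℕ. -/
lemma cdf_tendsto_one (hξm : Measurable ξ) :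
    Filter.Tendsto (fun n : ℕ => cdfOf P ξ n) Filter.atTop (nhds 1) := by
  have hmono : Monotone (fun n : ℕ => {ω | ξ ω ≤ (n : ℝ)}) := by
    intro n m hnm ω hω
    simp only [mem_setOf_eq] at *
    exact le_trans hω (by exact_mod_cast hnm)
  have hiUnion : (⋃ n : ℕ, {ω | ξ ω ≤ (n : ℝ)}) = univ := by
    ext ω
    simp only [mem_iUnion, mem_setOf_eq, mem_univ, iff_true]
    obtain ⟨n, hn⟩ := exists_nat_ge (ξ ω)
    exact ⟨n, hn⟩
  have hT := tendsto_measure_iUnion_atTop (μ := P) hmono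
  rw [hiUnion, measure_univ] at hT
  have := (ENNReal.tendsto_toReal (by simp : (1:ENNReal) ≠ ⊤)).comp hT
  simpa [cdfOf, Function.comp_def] using this

/-- For `u < 1` the set `{x | u ≤ F x}` is nonempty. -/
lemma quantile_set_nonempty (hξm : Measurable ξ) {u : ℝ} (hu : u < 1) :
    {x : ℝ | u ≤ cdfOf P ξ x}.Nonempty := by
  have h := cdf_tendsto_one P ξ hξm
  have : ∀ᶠ n : ℕ in Filter.atTop, u < cdfOf P ξ n :=
    h.eventually (eventually_gt_nhds hu)
  obtain ⟨n, hn⟩ := this.exists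
  exact ⟨n, le_of_lt hn⟩

/-- Hard direction: `quantileOf F u ≤ s → u ≤ F s` for `u ∈ (0,1)`. -/
lemma le_cdf_of_quantile_le (hξm : Measurable ξ) (hξnn : ∀ ω, 0 ≤ ξ ω)
    {u s : ℝ} (hu : 0 < u) (hu1 : u < 1)
    (h : quantileOf (cdfOf P ξ) u ≤ s) : u ≤ cdfOf P ξ s := by
  have hne := quantile_set_nonempty P ξ hξm hu1
  have key : ∀ n : ℕ, u ≤ cdfOf P ξ (s + 1 / (n + 1)) := by
    intro n
    have hpos : (0:ℝ) < 1 / ((n:ℝ) + 1) := by positivity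
    have hlt : quantileOf (cdfOf P ξ) u < s + 1 / (n + 1) := lt_of_le_of_lt h (by linarith)
    obtain ⟨x, hx, hxlt⟩ := exists_lt_of_csInf_lt hne hlt
    exact le_trans hx (cdf_mono P ξ (le_of_lt hxlt))
  exact ge_of_tendsto' (cdf_rightcont P ξ hξm s) key

/-- The truncated quantile function is measurable. -/
lemma measurable_gQuant (hξm : Measurable ξ) (hξnn : ∀ ω, 0 ≤ ξ ω) :
    Measurable (gQuant (cdfOf P ξ)) := by
  apply measurable_of_Iic
  intro s
  by_cases hs : 0 ≤ s
  · have : gQuant (cdfOf P ξ) ⁻¹' Iic s =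
        (Set.Ioo (0:ℝ) 1)ᶜ ∪ (Set.Ioo (0:ℝ) 1 ∩ Iic (cdfOf P ξ s)) := by
      ext u
      simp only [mem_preimage, mem_Iic, mem_union, mem_compl_iff, mem_inter_iff, mem_Ioo]
      by_cases hu : u ∈ Set.Ioo (0:ℝ) 1
      · simp only [gQuant, if_pos hu]
        constructor
        · intro h
          exact Or.inr ⟨hu, le_cdf_of_quantile_le P ξ hξm hξnn hu.1 hu.2 h⟩
        · rintro (h | ⟨-, h⟩)
          · exact absurd hu h
          · exact quantile_le P ξ hξnn hu.1 h
      · simp only [gQuant, if_neg hu]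
        constructor
        · intro _; exact Or.inl hu
        · intro _; exact hs
    rw [this]
    exact (measurableSet_Ioo.compl).union (measurableSet_Ioo.inter measurableSet_Iic)
  · have : gQuant (cdfOf P ξ) ⁻¹' Iic s = ∅ := by
      ext u
      simp only [mem_preimage, mem_Iic, mem_empty_iff_false, iff_false, not_le]
      exact lt_of_lt_of_le (by linarith) (gQuant_nonneg P ξ hξnn u)
    rw [this]
    exact MeasurableSet.empty

end Aux

/-- Double layer-cake formula. -/
lemma double_layercake {Ω : Type*} [MeasurableSpace Ω] (P : Measure Ω)
    [IsProbabilityMeasure P] (f g : Ω → ℝ) (hf : Measurable f) (hg : Measurable g)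
    (hfnn : ∀ ω, 0 ≤ f ω) (hgnn : ∀ ω, 0 ≤ g ω) :
    ∫⁻ ω, ENNReal.ofReal (f ω * g ω) ∂P
      = ∫⁻ p : ℝ × ℝ, P {ω | 0 < p.1 ∧ p.1 < f ω ∧ 0 < p.2 ∧ p.2 < g ω}
          ∂((volume : Measure ℝ).prod (volume : Measure ℝ)) := by
  classical
  set S : Set (Ω × (ℝ × ℝ)) :=
    {x | 0 < x.2.1 ∧ x.2.1 < f x.1 ∧ 0 < x.2.2 ∧ x.2.2 < g x.1} with hSdef
  have hS : MeasurableSet S := by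
    apply MeasurableSet.inter
    · exact measurableSet_lt measurable_const (measurable_fst.comp measurable_snd)
    apply MeasurableSet.inter
    · exact measurableSet_lt (measurable_fst.comp measurable_snd) (hf.comp measurable_fst)
    apply MeasurableSet.inter
    · exact measurableSet_lt measurable_const (measurable_snd.comp measurable_snd)
    · exact measurableSet_lt (measurable_snd.comp measurable_snd) (hg.comp measurable_fst)
  have step1 : ∀ ω, ENNReal.ofReal (f ω * g ω)
      = ∫⁻ p : ℝ × ℝ, S.indicator (fun _ => (1:ENNReal)) (ω, p)
          ∂((volume : Measure ℝ).prod volume) := by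
    intro ω
    have heq : ∀ p : ℝ × ℝ, S.indicator (fun _ => (1:ENNReal)) (ω, p)
        = (Set.Ioo 0 (f ω) ×ˢ Set.Ioo 0 (g ω)).indicator (fun _ => (1:ENNReal)) p := by
      intro p
      simp only [Set.indicator_apply, hSdef, mem_setOf_eq, Set.mem_prod, Set.mem_Ioo,
        and_assoc]
    rw [lintegral_congr heq]
    have hm2 : MeasurableSet (Set.Ioo 0 (f ω) ×ˢ Set.Ioo 0 (g ω)) :=
      measurableSet_Ioo.prod measurableSet_Ioo
    have := lintegral_indicator_one (μ := (volume : Measure ℝ).prod volume) hm2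
    rw [show (fun p : ℝ × ℝ => (Set.Ioo 0 (f ω) ×ˢ Set.Ioo 0 (g ω)).indicator
        (fun _ => (1:ENNReal)) p) = (Set.Ioo 0 (f ω) ×ˢ Set.Ioo 0 (g ω)).indicator 1 from rfl,
      this, Measure.prod_prod, Real.volume_Ioo, Real.volume_Ioo, sub_zero, sub_zero,
      ENNReal.ofReal_mul (hfnn ω)]
  have step2 : ∫⁻ ω, ∫⁻ p : ℝ × ℝ, S.indicator (fun _ => (1:ENNReal)) (ω, p)
        ∂((volume : Measure ℝ).prod volume) ∂P
      = ∫⁻ p : ℝ × ℝ, ∫⁻ ω, S.indicator (fun _ => (1:ENNReal)) (ω, p) ∂P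
        ∂((volume : Measure ℝ).prod volume) := by
    apply lintegral_lintegral_swap
    exact ((measurable_const.indicator hS).aemeasurable)
  have step3 : ∀ p : ℝ × ℝ, ∫⁻ ω, S.indicator (fun _ => (1:ENNReal)) (ω, p) ∂P
      = P {ω | 0 < p.1 ∧ p.1 < f ω ∧ 0 < p.2 ∧ p.2 < g ω} := by
    intro p
    have heq : ∀ ω, S.indicator (fun _ => (1:ENNReal)) (ω, p)
        = ({ω | 0 < p.1 ∧ p.1 < f ω ∧ 0 < p.2 ∧ p.2 < g ω}).indicator
            (fun _ => (1:ENNReal)) ω := by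
      intro ω
      simp only [Set.indicator_apply, hSdef, mem_setOf_eq]
    have hmeas : MeasurableSet {ω | 0 < p.1 ∧ p.1 < f ω ∧ 0 < p.2 ∧ p.2 < g ω} := by
      apply MeasurableSet.inter
      · exact MeasurableSet.const _
      apply MeasurableSet.inter
      · exact measurableSet_lt measurable_const hf
      apply MeasurableSet.inter
      · exact MeasurableSet.const _
      · exact measurableSet_lt measurable_const hg
    rw [lintegral_congr heq]
    exact lintegral_indicator_one hmeas
  calc ∫⁻ ω, ENNReal.ofReal (f ω * g ω) ∂P
      = ∫⁻ ω, ∫⁻ p : ℝ × ℝ, S.indicator (fun _ => (1:ENNReal)) (ω, p)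
          ∂((volume : Measure ℝ).prod volume) ∂P := lintegral_congr step1
    _ = ∫⁻ p : ℝ × ℝ, ∫⁻ ω, S.indicator (fun _ => (1:ENNReal)) (ω, p) ∂P
          ∂((volume : Measure ℝ).prod volume) := step2
    _ = ∫⁻ p : ℝ × ℝ, P {ω | 0 < p.1 ∧ p.1 < f ω ∧ 0 < p.2 ∧ p.2 < g ω}
          ∂((volume : Measure ℝ).prod volume) := lintegral_congr step3

/-- Fréchet–Hoeffding pointwise bound via inclusion–exclusion. -/
lemma frechet_pointwise {Ω : Type*} [MeasurableSpace Ω] (P : Measure Ω)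
    [IsProbabilityMeasure P] (ξ Y : Ω → ℝ) (hξm : Measurable ξ) (hYm : Measurable Y)
    (s t : ℝ) :
    ENNReal.ofReal (1 - cdfOf P ξ s - cdfOf P Y t) ≤ P {ω | s < ξ ω ∧ t < Y ω} := by
  set A := {ω | s < ξ ω} with hA
  set B := {ω | t < Y ω} with hB
  have hAm : MeasurableSet A := measurableSet_lt measurable_const hξm
  have hBm : MeasurableSet B := measurableSet_lt measurable_const hYm
  rcases le_or_gt (1 - cdfOf P ξ s - cdfOf P Y t) 0 with hneg | hpos
  · simp [ENNReal.ofReal_of_nonpos hneg]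
  · have hIE : P (A ∪ B) + P (A ∩ B) = P A + P B := measure_union_add_inter A hBm
    have hIE' : (P (A ∪ B)).toReal + (P (A ∩ B)).toReal
        = (P A).toReal + (P B).toReal := by
      rw [← ENNReal.toReal_add (measure_ne_top _ _) (measure_ne_top _ _),
        ← ENNReal.toReal_add (measure_ne_top _ _) (measure_ne_top _ _), hIE]
    have hAc : (P A).toReal = 1 - cdfOf P ξ s := by
      have hcompl : Aᶜ = {ω | ξ ω ≤ s} := by
        ext ω; simp [hA, not_lt]
      have := measure_add_measure_compl hAm (μ := P)
      rw [hcompl, measure_univ] at this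
      have := congrArg ENNReal.toReal this
      rw [ENNReal.toReal_add (measure_ne_top _ _) (measure_ne_top _ _)] at this
      simp only [ENNReal.toReal_one] at this
      unfold cdfOf
      linarith
    have hBc : (P B).toReal = 1 - cdfOf P Y t := by
      have hcompl : Bᶜ = {ω | Y ω ≤ t} := by
        ext ω; simp [hB, not_lt]
      have := measure_add_measure_compl hBm (μ := P)
      rw [hcompl, measure_univ] at this
      have := congrArg ENNReal.toReal this
      rw [ENNReal.toReal_add (measure_ne_top _ _) (measure_ne_top _ _)] at this
      simp only [ENNReal.toReal_one] at this
      unfold cdfOf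
      linarith
    have hUle : (P (A ∪ B)).toReal ≤ 1 := by
      have h : P (A ∪ B) ≤ 1 := by simpa using measure_mono (μ := P) (subset_univ (A ∪ B))
      calc (P (A ∪ B)).toReal ≤ (1:ENNReal).toReal :=
            ENNReal.toReal_mono ENNReal.one_ne_top h
        _ = 1 := ENNReal.toReal_one
    have hfinal : 1 - cdfOf P ξ s - cdfOf P Y t ≤ (P (A ∩ B)).toReal := by linarith
    calc ENNReal.ofReal (1 - cdfOf P ξ s - cdfOf P Y t)
        ≤ ENNReal.ofReal ((P (A ∩ B)).toReal) := ENNReal.ofReal_le_ofReal hfinal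
      _ = P (A ∩ B) := ENNReal.ofReal_toReal (measure_ne_top _ _)
      _ = P {ω | s < ξ ω ∧ t < Y ω} := by rw [hA, hB]; rfl

/-- Fréchet–Hoeffding lower bound: for nonnegative random variables `ξ` and `Y` and a
uniform(0,1) random variable `U`, `E[F_ξ⁻¹(U) · F_Y⁻¹(1−U)] ≤ E[ξY]` (expectations in
`[0,∞]`). -/
theorem stmt_7 {Ω : Type*} [MeasurableSpace Ω] (P : Measure Ω) [IsProbabilityMeasure P]
    (ξ Y U : Ω → ℝ) (hξm : Measurable ξ) (hYm : Measurable Y) (hUm : Measurable U)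
    (hξnn : ∀ ω, 0 ≤ ξ ω) (hYnn : ∀ ω, 0 ≤ Y ω)
    (hU : Measure.map U P = (MeasureTheory.volume.restrict (Set.Ioo (0:ℝ) 1))) :
    ∫⁻ ω, ENNReal.ofReal
        (quantileOf (cdfOf P ξ) (U ω) * quantileOf (cdfOf P Y) (1 - U ω)) ∂P
      ≤ ∫⁻ ω, ENNReal.ofReal (ξ ω * Y ω) ∂P := by
  set F := cdfOf P ξ with hF
  set G := cdfOf P Y with hG
  -- a.e., U ω ∈ (0,1)
  have hUae : ∀ᵐ ω ∂P, U ω ∈ Set.Ioo (0:ℝ) 1 := by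
    have h1 : P (U ⁻¹' (Set.Ioo (0:ℝ) 1)) = 1 := by
      rw [← Measure.map_apply hUm measurableSet_Ioo, hU,
        Measure.restrict_apply measurableSet_Ioo]
      simp [Real.volume_Ioo]
    have h0 : P ((U ⁻¹' (Set.Ioo (0:ℝ) 1))ᶜ) = 0 :=
      (prob_compl_eq_zero_iff (hUm measurableSet_Ioo)).mpr h1
    rw [ae_iff]
    exact h0
  -- replace quantiles by truncated quantiles
  have hcongr : ∫⁻ ω, ENNReal.ofReal
        (quantileOf F (U ω) * quantileOf G (1 - U ω)) ∂P
      = ∫⁻ ω, ENNReal.ofReal (gQuant F (U ω) * gQuant G (1 - U ω)) ∂P := by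
    apply lintegral_congr_ae
    filter_upwards [hUae] with ω hω
    have h2 : 1 - U ω ∈ Set.Ioo (0:ℝ) 1 := by
      simp only [Set.mem_Ioo] at *
      constructor <;> linarith [hω.1, hω.2]
    rw [gQuant, gQuant, if_pos hω, if_pos h2]
  rw [hcongr]
  have hfm : Measurable (fun ω => gQuant F (U ω)) :=
    (measurable_gQuant P ξ hξm hξnn).comp hUm
  have hgm : Measurable (fun ω => gQuant G (1 - U ω)) :=
    (measurable_gQuant P Y hYm hYnn).comp (measurable_const.sub hUm)
  rw [double_layercake P _ _ hfm hgm (fun ω => gQuant_nonneg P ξ hξnn _)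
    (fun ω => gQuant_nonneg P Y hYnn _),
    double_layercake P ξ Y hξm hYm hξnn hYnn]
  apply lintegral_mono
  rintro ⟨s, t⟩
  simp only
  by_cases hs : 0 < s
  · by_cases ht : 0 < t
    · have hsub : {ω | 0 < s ∧ s < gQuant F (U ω) ∧ 0 < t ∧ t < gQuant G (1 - U ω)}
          ⊆ U ⁻¹' (Set.Ioo (F s) (1 - G t)) := by
        rintro ω ⟨-, h1, -, h2⟩
        obtain ⟨hFs, hu0, hu1⟩ := lt_of_lt_gQuant P ξ hξnn hs h1
        obtain ⟨hGt, hv0, hv1⟩ := lt_of_lt_gQuant P Y hYnn ht h2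
        exact ⟨hFs, by linarith⟩
      calc P {ω | 0 < s ∧ s < gQuant F (U ω) ∧ 0 < t ∧ t < gQuant G (1 - U ω)}
          ≤ P (U ⁻¹' (Set.Ioo (F s) (1 - G t))) := measure_mono hsub
        _ = (volume.restrict (Set.Ioo (0:ℝ) 1)) (Set.Ioo (F s) (1 - G t)) := by
            rw [← hU, Measure.map_apply hUm measurableSet_Ioo]
        _ ≤ volume (Set.Ioo (F s) (1 - G t)) := by
            rw [Measure.restrict_apply measurableSet_Ioo]
            exact measure_mono Set.inter_subset_left
        _ = ENNReal.ofReal (1 - F s - G t) := by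
            rw [Real.volume_Ioo]; ring_nf
        _ ≤ P {ω | s < ξ ω ∧ t < Y ω} := frechet_pointwise P ξ Y hξm hYm s t
        _ = P {ω | 0 < s ∧ s < ξ ω ∧ 0 < t ∧ t < Y ω} := by
            congr 1; ext ω; simp [hs, ht]
    · have : {ω | 0 < s ∧ s < gQuant F (U ω) ∧ 0 < t ∧ t < gQuant G (1 - U ω)} = ∅ := by
        ext ω; simp only [mem_setOf_eq, Set.mem_empty_iff_false, iff_false]
        rintro ⟨-, -, ht', -⟩; exact ht ht'
      simp [this]
  · have : {ω | 0 < s ∧ s < gQuant F (U ω) ∧ 0 < t ∧ t < gQuant G (1 - U ω)} = ∅ := by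
      ext ω; simp only [mem_setOf_eq, Set.mem_empty_iff_false, iff_false]
      rintro ⟨hs', -⟩; exact hs hs'
    simp [this]
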